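/- Let G be a finite group acting on a finite set S, f : S → S G-equivariant, and N = |G| · (max over H ≤ G of (card(S/H))!). Then for every subgroup H ≤ G, the number of H-orbits of Per_N(S,f) equals the number of periodic points of the induced map f_H on S/H: |Per_N(S,f)/H| = |Per(S/H, f_H)|. -/

import Mathlib

open scoped Classical

/-- With `N = |G| * max_{H ≤ G} (card (S/H))!`, for every subgroup `H ≤ G` the
number of `H`-orbits of `Per_N(S,f)` equals the number of periodic points of the
induced map `f_H` on `S/H`.  Since `Per_N(S,f)` is `H`-invariant, its set of
`H`-orbits is identified with its image in `S/H`. -/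
theorem card_orbits_perN_eq_card_periodic {G S : Type} [Group G] [Fintype G]
    [Fintype S] [MulAction G S]
    (f : S → S) (hf : ∀ (g : G) (x : S), f (g • x) = g • f x)
    (fbar : ∀ H : Subgroup G,
      Quotient (MulAction.orbitRel H S) → Quotient (MulAction.orbitRel H S))
    (hfbar : ∀ H : Subgroup G, fbar H ∘ Quotient.mk (MulAction.orbitRel H S) =
      Quotient.mk (MulAction.orbitRel H S) ∘ f)
    (N : ℕ)
    (hN : N = Nat.card G * (Finset.univ.sup fun H : Subgroup G =>
      Nat.factorial (Nat.card (Quotient (MulAction.orbitRel H S))))) :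
    ∀ H : Subgroup G,
      Nat.card (Quotient.mk (MulAction.orbitRel H S) '' {P : S | f^[N] P = P} : Set _) =
        Nat.card {Q : Quotient (MulAction.orbitRel H S) //
          ∃ k ≥ 1, (fbar H)^[k] Q = Q} := by
  -- card of the quotient by the trivial subgroup
  have hcard_bot : Nat.card (Quotient (MulAction.orbitRel (⊥ : Subgroup G) S))
      = Nat.card S := by
    refine (Nat.card_eq_of_bijective (Quotient.mk (MulAction.orbitRel (⊥ : Subgroup G) S))
      ⟨?_, fun q => Quotient.exists_rep q⟩).symm
    intro a b h
    obtain ⟨g, hg⟩ := (MulAction.orbitRel_apply (G := (⊥ : Subgroup G))).mp (Quotient.exact h)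
    have hg1 : (g : G) = 1 := Subgroup.mem_bot.mp g.2
    have hg' : (1 : G) • b = a := by rw [← hg1]; simpa [Subgroup.smul_def] using hg
    rw [one_smul] at hg'
    exact hg'.symm
  -- the sup equals (card S)!
  have hsup : (Finset.univ.sup fun H' : Subgroup G =>
      Nat.factorial (Nat.card (Quotient (MulAction.orbitRel H' S))))
      = Nat.factorial (Nat.card S) := by
    apply le_antisymm
    · apply Finset.sup_le
      intro H' _
      apply Nat.factorial_le
      rw [Nat.card_eq_fintype_card, Nat.card_eq_fintype_card]
      exact Fintype.card_quotient_le _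
    · have := Finset.le_sup (f := fun H' : Subgroup G =>
        Nat.factorial (Nat.card (Quotient (MulAction.orbitRel H' S))))
        (Finset.mem_univ (⊥ : Subgroup G))
      rwa [hcard_bot] at this
  have hN' : N = Nat.card G * Nat.factorial (Nat.card S) := by rw [hN, hsup]
  have hdvd : Nat.factorial (Nat.card S) ∣ N := hN' ▸ Dvd.intro_left _ rfl
  have hNpos : 1 ≤ N := by
    rw [hN']
    exact Nat.one_le_iff_ne_zero.mpr (Nat.mul_ne_zero
      (Nat.card_pos (α := G)).ne' (Nat.factorial_pos _).ne')
  intro H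
  -- compatibility of iterates with the quotient map
  have hcomm : ∀ (n : ℕ) (x : S),
      (fbar H)^[n] (Quotient.mk (MulAction.orbitRel H S) x)
        = Quotient.mk (MulAction.orbitRel H S) (f^[n] x) := by
    intro n
    induction n with
    | zero => intro x; rfl
    | succ n ih =>
      intro x
      rw [Function.iterate_succ_apply', ih, Function.iterate_succ_apply',
        ← Function.comp_apply (f := fbar H), hfbar H, Function.comp_apply]
  -- the two sets coincide
  have hset : (Quotient.mk (MulAction.orbitRel H S) '' {P : S | f^[N] P = P} : Set _)
      = {Q | ∃ k ≥ 1, (fbar H)^[k] Q = Q} := by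
    ext Q
    constructor
    · rintro ⟨x, hx, rfl⟩
      exact ⟨N, hNpos, by rw [hcomm, hx]⟩
    · rintro ⟨k, hk, hQ⟩
      obtain ⟨x, rfl⟩ := Quotient.exists_rep Q
      -- pigeonhole: the sequence n ↦ f^[n*k] x repeats
      have hnotinj : ¬ Function.Injective
          (fun i : Fin (Fintype.card S + 1) => f^[(i : ℕ) * k] x) := by
        intro hinj
        have := Fintype.card_le_of_injective _ hinj
        simp at this
      obtain ⟨a, b, hab, hne⟩ := Function.not_injective_iff.mp hnotinj
      -- get i < j with equal images
      obtain ⟨i, j, hij, hijeq⟩ : ∃ i j : ℕ, i < j ∧ f^[i * k] x = f^[j * k] x := by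
        rcases lt_or_gt_of_ne hne with h | h
        · exact ⟨a, b, h, hab⟩
        · exact ⟨b, a, h, hab.symm⟩
      set y := f^[i * k] x with hy
      have hper : Function.IsPeriodicPt f ((j - i) * k) y := by
        show f^[(j - i) * k] y = y
        rw [hy, ← Function.iterate_add_apply, ← Nat.add_mul,
          Nat.sub_add_cancel hij.le]
        exact hijeq.symm
      have hppos : 0 < (j - i) * k :=
        Nat.mul_pos (Nat.sub_pos_of_lt hij) hk
      set m := Function.minimalPeriod f y with hm
      have hmpos : 0 < m := hper.minimalPeriod_pos hppos
      have hmle : m ≤ Fintype.card S := by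
        have hinj : Function.Injective (fun i : Fin m => f^[(i : ℕ)] y) := by
          intro a b hab
          exact Fin.ext (Function.iterate_injOn_Iio_minimalPeriod a.2 b.2 hab)
        simpa using Fintype.card_le_of_injective _ hinj
      have hmdvd : m ∣ N :=
        dvd_trans (Nat.dvd_factorial hmpos (by rwa [Nat.card_eq_fintype_card])) hdvd
      have hyper : f^[N] y = y :=
        Function.isPeriodicPt_iff_minimalPeriod_dvd.mpr hmdvd
      refine ⟨y, hyper, ?_⟩
      -- ⟦y⟧ = ⟦x⟧ since fbar^[k] ⟦x⟧ = ⟦x⟧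
      rw [← hcomm (i * k) x, Nat.mul_comm, Function.iterate_mul]
      exact Function.iterate_fixed hQ i
  rw [hset]
  rfl
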